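/- Define r(c,t) = 2·sinh(√(1−c²)·t/2)/√(1−c²) if c² < 1, r(c,t) = t if c² = 1, and r(c,t) = 2·sin(√(c²−1)·t/2)/√(c²−1) if c² > 1. Let T > 0 and c, d ∈ ℝ satisfy: if c² > 1 then √(c²−1)·T/2 ∈ (0, π), and if d² > 1 then √(d²−1)·T/2 ∈ (0, π). If r(c,T) = r(d,T), then c² = d². -/

import Mathlib

open Real

/-- The invariant `r(c,t)` of the geodesics of `SL(2)`. -/
noncomputable def r (c t : ℝ) : ℝ :=
  if c ^ 2 < 1 then 2 * Real.sinh (Real.sqrt (1 - c ^ 2) * t / 2) / Real.sqrt (1 - c ^ 2)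
  else if c ^ 2 = 1 then t
  else 2 * Real.sin (Real.sqrt (c ^ 2 - 1) * t / 2) / Real.sqrt (c ^ 2 - 1)



lemma aux_sinh_lt_mul_cosh {x : ℝ} (hx : 0 < x) : Real.sinh x < x * Real.cosh x := by
  have key : StrictMonoOn (fun y => y * Real.cosh y - Real.sinh y) (Set.Icc 0 x) := by
    apply strictMonoOn_of_deriv_pos (convex_Icc 0 x)
    · fun_prop
    · intro y hy
      rw [interior_Icc] at hy
      have hd : HasDerivAt (fun y => y * Real.cosh y - Real.sinh y)
          (1 * Real.cosh y + y * Real.sinh y - Real.cosh y) y :=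
        ((hasDerivAt_id y).mul (Real.hasDerivAt_cosh y)).sub (Real.hasDerivAt_sinh y)
      rw [hd.deriv]
      have : 0 < y * Real.sinh y := mul_pos hy.1 (Real.sinh_pos_iff.2 hy.1)
      nlinarith
  have := key (Set.left_mem_Icc.2 hx.le) (Set.right_mem_Icc.2 hx.le) hx
  simp at this
  nlinarith

lemma aux_mul_cos_lt_sin {x : ℝ} (hx : 0 < x) (hx' : x ≤ π) : x * Real.cos x < Real.sin x := by
  have key : StrictMonoOn (fun y => Real.sin y - y * Real.cos y) (Set.Icc 0 x) := by
    apply strictMonoOn_of_deriv_pos (convex_Icc 0 x)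
    · fun_prop
    · intro y hy
      rw [interior_Icc] at hy
      have hd : HasDerivAt (fun y => Real.sin y - y * Real.cos y)
          (Real.cos y - (1 * Real.cos y + y * -Real.sin y)) y :=
        (Real.hasDerivAt_sin y).sub ((hasDerivAt_id y).mul (Real.hasDerivAt_cos y))
      rw [hd.deriv]
      have hs : 0 < Real.sin y := Real.sin_pos_of_pos_of_lt_pi hy.1 (lt_of_lt_of_le hy.2 hx')
      have : 0 < y * Real.sin y := mul_pos hy.1 hs
      nlinarith
  have := key (Set.left_mem_Icc.2 hx.le) (Set.right_mem_Icc.2 hx.le) hx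
  simp at this
  nlinarith

lemma aux_sinh_div_strictMono : StrictMonoOn (fun x => Real.sinh x / x) (Set.Ioi 0) := by
  apply strictMonoOn_of_deriv_pos (convex_Ioi 0)
  · apply ContinuousOn.div Real.continuous_sinh.continuousOn continuousOn_id
    intro x hx; exact ne_of_gt hx
  · intro x hx
    rw [interior_Ioi] at hx
    have hd : HasDerivAt (fun y => Real.sinh y / y)
        ((Real.cosh x * x - Real.sinh x * 1) / x ^ 2) x :=
      (Real.hasDerivAt_sinh x).div (hasDerivAt_id x) (ne_of_gt hx)
    rw [hd.deriv]
    have := aux_sinh_lt_mul_cosh hx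
    have hx2 : 0 < x ^ 2 := pow_pos hx 2
    apply div_pos _ hx2
    nlinarith

lemma aux_sin_div_strictAnti : StrictAntiOn (fun x => Real.sin x / x) (Set.Ioo 0 π) := by
  apply strictAntiOn_of_deriv_neg (convex_Ioo 0 π)
  · apply ContinuousOn.div Real.continuous_sin.continuousOn continuousOn_id
    intro x hx; exact ne_of_gt hx.1
  · intro x hx
    rw [interior_Ioo] at hx
    have hd : HasDerivAt (fun y => Real.sin y / y)
        ((Real.cos x * x - Real.sin x * 1) / x ^ 2) x :=
      (Real.hasDerivAt_sin x).div (hasDerivAt_id x) (ne_of_gt hx.1)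
    rw [hd.deriv]
    have := aux_mul_cos_lt_sin hx.1 hx.2.le
    have hx2 : 0 < x ^ 2 := pow_pos hx.1 2
    apply div_neg_of_neg_of_pos _ hx2
    nlinarith

lemma r_of_lt {c T : ℝ} (h : c ^ 2 < 1) :
    r c T = 2 * Real.sinh (Real.sqrt (1 - c ^ 2) * T / 2) / Real.sqrt (1 - c ^ 2) := by
  rw [r, if_pos h]

lemma r_of_gt {c T : ℝ} (h : 1 < c ^ 2) :
    r c T = 2 * Real.sin (Real.sqrt (c ^ 2 - 1) * T / 2) / Real.sqrt (c ^ 2 - 1) := by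
  rw [r, if_neg (not_lt.2 h.le), if_neg (ne_of_gt h)]

lemma r_rewrite_lt {c T : ℝ} (hT : 0 < T) (h : c ^ 2 < 1) :
    r c T = T * (Real.sinh (Real.sqrt (1 - c ^ 2) * T / 2) / (Real.sqrt (1 - c ^ 2) * T / 2)) := by
  have ha : 0 < Real.sqrt (1 - c ^ 2) := Real.sqrt_pos.2 (by linarith)
  rw [r_of_lt h]
  field_simp

lemma r_rewrite_gt {c T : ℝ} (hT : 0 < T) (h : 1 < c ^ 2) :
    r c T = T * (Real.sin (Real.sqrt (c ^ 2 - 1) * T / 2) / (Real.sqrt (c ^ 2 - 1) * T / 2)) := by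
  have ha : 0 < Real.sqrt (c ^ 2 - 1) := Real.sqrt_pos.2 (by linarith)
  rw [r_of_gt h]
  field_simp

lemma r_gt_T {c T : ℝ} (hT : 0 < T) (h : c ^ 2 < 1) : T < r c T := by
  have ha : 0 < Real.sqrt (1 - c ^ 2) := Real.sqrt_pos.2 (by linarith)
  have hu : 0 < Real.sqrt (1 - c ^ 2) * T / 2 := by positivity
  rw [r_rewrite_lt hT h]
  have : 1 < Real.sinh (Real.sqrt (1 - c ^ 2) * T / 2) / (Real.sqrt (1 - c ^ 2) * T / 2) := by
    rw [lt_div_iff₀ hu, one_mul]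
    exact Real.self_lt_sinh_iff.2 hu
  nlinarith

lemma r_lt_T {c T : ℝ} (hT : 0 < T) (h : 1 < c ^ 2)
    (hc : Real.sqrt (c ^ 2 - 1) * T / 2 ∈ Set.Ioo 0 π) : r c T < T := by
  rw [r_rewrite_gt hT h]
  have hu := hc.1
  have : Real.sin (Real.sqrt (c ^ 2 - 1) * T / 2) / (Real.sqrt (c ^ 2 - 1) * T / 2) < 1 := by
    rw [div_lt_one hu]
    exact Real.sin_lt hu
  nlinarith

/-- If `r(c,T) = r(d,T)` for a common time `T > 0` (with the angle conditions when
`c² > 1` or `d² > 1`), then `c² = d²`. -/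
theorem sl2_r_eq_imp_c_sq_eq (c d T : ℝ) (hT : 0 < T)
    (hc : 1 < c ^ 2 → Real.sqrt (c ^ 2 - 1) * T / 2 ∈ Set.Ioo 0 Real.pi)
    (hd : 1 < d ^ 2 → Real.sqrt (d ^ 2 - 1) * T / 2 ∈ Set.Ioo 0 Real.pi)
    (h : r c T = r d T) :
    c ^ 2 = d ^ 2 := by
  rcases lt_trichotomy (c ^ 2) 1 with h1 | h1 | h1 <;>
    rcases lt_trichotomy (d ^ 2) 1 with h2 | h2 | h2
  · -- both < 1
    have ha : 0 < Real.sqrt (1 - c ^ 2) := Real.sqrt_pos.2 (by linarith)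
    have hb : 0 < Real.sqrt (1 - d ^ 2) := Real.sqrt_pos.2 (by linarith)
    have hu : Real.sqrt (1 - c ^ 2) * T / 2 ∈ Set.Ioi (0:ℝ) := by
      simp only [Set.mem_Ioi]; positivity
    have hv : Real.sqrt (1 - d ^ 2) * T / 2 ∈ Set.Ioi (0:ℝ) := by
      simp only [Set.mem_Ioi]; positivity
    rw [r_rewrite_lt hT h1, r_rewrite_lt hT h2] at h
    have heq : Real.sinh (Real.sqrt (1 - c ^ 2) * T / 2) / (Real.sqrt (1 - c ^ 2) * T / 2)
        = Real.sinh (Real.sqrt (1 - d ^ 2) * T / 2) / (Real.sqrt (1 - d ^ 2) * T / 2) := by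
      have := mul_left_cancel₀ (ne_of_gt hT) h
      exact this
    have := aux_sinh_div_strictMono.injOn hu hv heq
    have hab : Real.sqrt (1 - c ^ 2) = Real.sqrt (1 - d ^ 2) := by
      field_simp at this
      exact this
    have := congrArg (· ^ 2) hab
    simp only [Real.sq_sqrt (by linarith : (0:ℝ) ≤ 1 - c ^ 2),
      Real.sq_sqrt (by linarith : (0:ℝ) ≤ 1 - d ^ 2)] at this
    linarith
  · exfalso; have := r_gt_T hT h1; rw [h, r, if_neg (by linarith), if_pos h2] at this; linarith
  · exfalso
    have h3 := r_gt_T hT h1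
    have h4 := r_lt_T hT h2 (hd h2)
    linarith [h.symm ▸ h3]
  · exfalso; have := r_gt_T hT h2; rw [← h, r, if_neg (by linarith), if_pos h1] at this; linarith
  · linarith
  · exfalso
    have h4 := r_lt_T hT h2 (hd h2)
    rw [← h, r, if_neg (by linarith), if_pos h1] at h4
    linarith
  · exfalso
    have h3 := r_lt_T hT h1 (hc h1)
    have h4 := r_gt_T hT h2
    rw [h] at h3
    linarith
  · exfalso
    have h3 := r_lt_T hT h1 (hc h1)
    rw [h, r, if_neg (by linarith), if_pos h2] at h3
    linarith
  · -- both > 1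
    have ha : 0 < Real.sqrt (c ^ 2 - 1) := Real.sqrt_pos.2 (by linarith)
    have hb : 0 < Real.sqrt (d ^ 2 - 1) := Real.sqrt_pos.2 (by linarith)
    rw [r_rewrite_gt hT h1, r_rewrite_gt hT h2] at h
    have heq : Real.sin (Real.sqrt (c ^ 2 - 1) * T / 2) / (Real.sqrt (c ^ 2 - 1) * T / 2)
        = Real.sin (Real.sqrt (d ^ 2 - 1) * T / 2) / (Real.sqrt (d ^ 2 - 1) * T / 2) :=
      mul_left_cancel₀ (ne_of_gt hT) h
    have := aux_sin_div_strictAnti.injOn (hc h1) (hd h2) heq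
    have hab : Real.sqrt (c ^ 2 - 1) = Real.sqrt (d ^ 2 - 1) := by
      field_simp at this
      exact this
    have := congrArg (· ^ 2) hab
    simp only [Real.sq_sqrt (by linarith : (0:ℝ) ≤ c ^ 2 - 1),
      Real.sq_sqrt (by linarith : (0:ℝ) ≤ d ^ 2 - 1)] at this
    linarith
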